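/- arXiv:2008.03360 — 8 statements merged into one kernel-verified Lean document; each statement's English description precedes it below -/
import Mathlib

section
/- Let X be a set with a scale 𝒰 (a cover of X). Suppose that for every V ⊆ X there exists a 𝒰-net of V of cardinality at most n. Then every st(𝒰,𝒰)-net of V has cardinality at most 2n. -/
open Set

variable {X Y : Type*}

/-- The star of a set `V` against a family `U` of subsets of `X`. -/
def stA (V : Set X) (U : Set (Set X)) : Set X :=
  ⋃₀ {A | A ∈ U ∧ (A ∩ V).Nonempty}

/-- The star of a family `V` against a family `U`. -/
def stF (V U : Set (Set X)) : Set (Set X) := (fun A => stA A U) '' V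

/-- No two distinct elements of `B` belong to a common element of `U`. -/
def NoTwo (U : Set (Set X)) (B : Set X) : Prop :=
  ∀ x ∈ B, ∀ y ∈ B, x ≠ y → ∀ A ∈ U, ¬(x ∈ A ∧ y ∈ A)

/-- `B` is a `U`-net of `V`: a maximal subset of `V` no two of whose elements
lie in a common element of `U`. -/
def IsNet (U : Set (Set X)) (V B : Set X) : Prop :=
  B ⊆ V ∧ NoTwo U B ∧ ∀ B' : Set X, B ⊆ B' → B' ⊆ V → NoTwo U B' → B' = B

/-- If every subset of `X` admits a `U`-net with at most `n` elements, then every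
`st(U,U)`-net of any subset has at most `2n` elements. -/
theorem star_net_bound (U : Set (Set X)) (hcov : ⋃₀ U = Set.univ) (n : ℕ)
    (h : ∀ V : Set X, ∃ B : Set X, IsNet U V B ∧ B.Finite ∧ B.ncard ≤ n) :
    ∀ V A : Set X, IsNet (stF U U) V A → A.Finite ∧ A.ncard ≤ 2 * n := by

  intro V A hA
  obtain ⟨hAV, hnt, hmax⟩ := hA
  obtain ⟨B, ⟨hBA, hBnt, hBmax⟩, hBfin, hBcard⟩ := h A
  -- every a in A shares a common U-element with some b in B
  have key : ∀ a ∈ A, ∃ b ∈ B, ∃ W ∈ U, a ∈ W ∧ b ∈ W := by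
    intro a ha
    by_cases hab : a ∈ B
    · have : a ∈ ⋃₀ U := by rw [hcov]; trivial
      obtain ⟨W, hWU, haW⟩ := this
      exact ⟨a, hab, W, hWU, haW, haW⟩
    · have hne : insert a B ≠ B := by
        intro hEq
        exact hab (hEq ▸ mem_insert a B)
      have hnot : ¬ NoTwo U (insert a B) := by
        intro hnt'
        exact hne (hBmax _ (subset_insert a B) (insert_subset ha hBA) hnt')
      simp only [NoTwo, not_forall, not_not] at hnot
      obtain ⟨x, hx, y, hy, hxy, W, hWU, hxW, hyW⟩ := hnot
      rcases hx with rfl | hxB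
      · rcases hy with rfl | hyB
        · exact absurd rfl hxy
        · exact ⟨y, hyB, W, hWU, hxW, hyW⟩
      · rcases hy with rfl | hyB
        · exact ⟨x, hxB, W, hWU, hyW, hxW⟩
        · exact absurd ⟨hxW, hyW⟩ (hBnt x hxB y hyB hxy W hWU)
  choose! f hfB W hWU haW hfW using key
  have hinj : Set.InjOn f A := by
    intro a1 h1 a2 h2 hfe
    by_contra hne
    have hst : stA (W a1) U ∈ stF U U := ⟨W a1, hWU a1 h1, rfl⟩
    have ha1 : a1 ∈ stA (W a1) U := ⟨W a1, ⟨hWU a1 h1, ⟨a1, haW a1 h1, haW a1 h1⟩⟩, haW a1 h1⟩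
    have ha2 : a2 ∈ stA (W a1) U := by
      refine ⟨W a2, ⟨hWU a2 h2, ⟨f a1, ?_, hfW a1 h1⟩⟩, haW a2 h2⟩
      rw [hfe]; exact hfW a2 h2
    exact hnt a1 h1 a2 h2 hne _ hst ⟨ha1, ha2⟩
  have himg : f '' A ⊆ B := by
    rintro _ ⟨a, ha, rfl⟩; exact hfB a ha
  have hAfin : A.Finite := Set.Finite.of_finite_image (hBfin.subset himg) hinj
  refine ⟨hAfin, ?_⟩
  calc A.ncard = (f '' A).ncard := (Set.ncard_image_of_injOn hinj).symm
    _ ≤ B.ncard := Set.ncard_le_ncard himg hBfin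
    _ ≤ n := hBcard
    _ ≤ 2 * n := by omega
end

section
/- A large scale space (X, ℒ) has bounded scale measure (at some scale) if and only if there exists a uniformly bounded scale 𝒰 ∈ ℒ such that for every scale 𝒱 ∈ ℒ there is a natural number k(𝒱) such that every V ∈ 𝒱 can be covered by at most k(𝒱) elements of 𝒰. -/
open Set

variable {X Y : Type*}

/-- A large scale structure on `X`. -/
structure LSS (X : Type*) where
  fam : Set (Set (Set X))
  nonempty : fam.Nonempty
  refine : ∀ U V : Set (Set X), V ∈ fam →
    (∀ A ∈ U, (∃ a ∈ A, ∃ b ∈ A, a ≠ b) → ∃ B ∈ V, A ⊆ B) → U ∈ fam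
  star : ∀ U ∈ fam, ∀ V ∈ fam, stF U V ∈ fam

/-- Bounded scale measure at scale `U` (net formulation): every `U`-net of every
element of every uniformly bounded scale has uniformly bounded cardinality. -/
def BSMat (L : LSS X) (U : Set (Set X)) : Prop :=
  U ∈ L.fam ∧ ∀ V ∈ L.fam, ∃ n : ℕ, ∀ W ∈ V, ∀ B : Set X,
    IsNet U W B → B.Finite ∧ B.ncard ≤ n

/-- Bounded scale measure at scale `U` (covering formulation): every element of
every uniformly bounded scale is covered by a bounded number of elements of `U`. -/
def BSMcov (L : LSS X) (U : Set (Set X)) : Prop :=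
  U ∈ L.fam ∧ ∀ V ∈ L.fam, ∃ k : ℕ, ∀ W ∈ V,
    ∃ F : Finset (Set X), ↑F ⊆ U ∧ F.card ≤ k ∧ W ⊆ ⋃₀ ↑F

/-- A large scale space has bounded scale measure at some scale iff there is a
uniformly bounded scale `U` such that every element of every uniformly bounded
scale is covered by a bounded number of elements of `U`. -/
theorem bsm_iff_cov (L : LSS X) :
    (∃ U : Set (Set X), BSMat L U) ↔ (∃ U : Set (Set X), BSMcov L U) := by
  classical
  constructor
  · rintro ⟨U, hU, hbd⟩
    set U₁ : Set (Set X) := U ∪ {S | ∃ x, S = {x}} with hU₁def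
    have hU₁ : U₁ ∈ L.fam := by
      apply L.refine U₁ U hU
      rintro A (hA | ⟨x, rfl⟩) h2
      · exact ⟨A, hA, subset_rfl⟩
      · obtain ⟨a, ha, b, hb, hab⟩ := h2
        simp only [mem_singleton_iff] at ha hb
        exact absurd (ha.trans hb.symm) hab
    have hcov : stF U₁ U₁ ∈ L.fam := L.star U₁ hU₁ U₁ hU₁
    refine ⟨stF U₁ U₁, hcov, fun V hV => ?_⟩
    obtain ⟨n, hn⟩ := hbd V hV
    refine ⟨n, fun W hW => ?_⟩
    -- construct a net of W via Zorn
    obtain ⟨B, hBmax⟩ := zorn_subset {B : Set X | B ⊆ W ∧ NoTwo U B} (by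
      intro c hc hchain
      refine ⟨⋃₀ c, ⟨?_, ?_⟩, fun s hs => subset_sUnion_of_mem hs⟩
      · exact sUnion_subset fun s hs => (hc hs).1
      · rintro x ⟨s, hs, hxs⟩ y ⟨t, ht, hyt⟩ hxy A hA
        rcases hchain.total hs ht with hst | hts
        · exact (hc ht).2 x (hst hxs) y hyt hxy A hA
        · exact (hc hs).2 x hxs y (hts hyt) hxy A hA)
    obtain ⟨⟨hBW, hBnt⟩, hBm⟩ := hBmax
    have hnet : IsNet U W B := by
      refine ⟨hBW, hBnt, fun B' hBB' hB'W hB'nt => ?_⟩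
      exact subset_antisymm (hBm ⟨hB'W, hB'nt⟩ hBB') hBB'
    obtain ⟨hBfin, hBcard⟩ := hn W hW B hnet
    -- each point of W is in a common U₁-element with some point of B
    have key : ∀ x ∈ W, ∃ b ∈ B, ∃ A ∈ U₁, x ∈ A ∧ b ∈ A := by
      intro x hx
      by_cases hxB : x ∈ B
      · exact ⟨x, hxB, {x}, Or.inr ⟨x, rfl⟩, rfl, rfl⟩
      · have hne : ¬ NoTwo U (insert x B) := by
          intro hnt
          have := hnet.2.2 (insert x B) (subset_insert x B)
            (insert_subset hx hBW) hnt
          exact hxB (this ▸ mem_insert x B)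
        simp only [NoTwo, not_forall] at hne
        obtain ⟨p, hp, q, hq, hpq, A, hA, hcon⟩ := hne
        push_neg at hcon
        rcases mem_insert_iff.mp hp with rfl | hpB
        · rcases mem_insert_iff.mp hq with rfl | hqB
          · exact absurd rfl hpq
          · exact ⟨q, hqB, A, Or.inl hA, hcon.1, hcon.2⟩
        · rcases mem_insert_iff.mp hq with rfl | hqB
          · exact ⟨p, hpB, A, Or.inl hA, hcon.2, hcon.1⟩
          · exact absurd hcon (hBnt p hpB q hqB hpq A hA)
    refine ⟨hBfin.toFinset.image (fun b => stA {b} U₁), ?_, ?_, ?_⟩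
    · rintro S hS
      simp only [Finset.coe_image, mem_image, Set.Finite.coe_toFinset] at hS
      obtain ⟨b, hb, rfl⟩ := hS
      exact ⟨{b}, Or.inr ⟨b, rfl⟩, rfl⟩
    · calc (hBfin.toFinset.image (fun b => stA {b} U₁)).card
          ≤ hBfin.toFinset.card := Finset.card_image_le
        _ = B.ncard := (Set.ncard_eq_toFinset_card B hBfin).symm
        _ ≤ n := hBcard
    · intro x hx
      obtain ⟨b, hb, A, hA, hxA, hbA⟩ := key x hx
      refine ⟨stA {b} U₁, ?_, A, ⟨hA, b, hbA, rfl⟩, hxA⟩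
      simp only [Finset.coe_image, mem_image, Set.Finite.coe_toFinset]
      exact ⟨b, hb, rfl⟩
  · rintro ⟨U, hU, hbd⟩
    refine ⟨U, hU, fun V hV => ?_⟩
    obtain ⟨k, hk⟩ := hbd V hV
    refine ⟨k, fun W hW B hnet => ?_⟩
    obtain ⟨F, hFU, hFk, hWF⟩ := hk W hW
    have hchoose : ∀ b : B, ∃ A : Set X, A ∈ F ∧ (b : X) ∈ A := by
      rintro ⟨b, hb⟩
      obtain ⟨A, hAF, hbA⟩ := hWF (hnet.1 hb)
      exact ⟨A, hAF, hbA⟩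
    choose f hfF hfb using hchoose
    have hinj : Function.Injective fun b : B => (⟨f b, hfF b⟩ : {A // A ∈ F}) := by
      rintro ⟨b, hb⟩ ⟨b', hb'⟩ heq
      simp only [Subtype.mk.injEq] at heq ⊢
      by_contra hne
      exact hnet.2.1 b hb b' hb' hne (f ⟨b, hb⟩) (hFU (hfF ⟨b, hb⟩))
        ⟨hfb ⟨b, hb⟩, heq ▸ hfb ⟨b', hb'⟩⟩
    haveI : Finite B := Finite.of_injective _ hinj
    have hfin : B.Finite := Set.finite_coe_iff.mp ‹Finite B›
    refine ⟨hfin, ?_⟩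
    calc B.ncard = Nat.card B := (Nat.card_coe_set_eq B).symm
      _ ≤ Nat.card {A // A ∈ F} := Nat.card_le_card_of_injective _ hinj
      _ = F.card := by rw [Nat.card_eq_fintype_card, Fintype.card_coe]
      _ ≤ k := hFk
end

section
/- A large scale space (X, ℒ) has bounded scale measure if and only if there exists a uniformly bounded scale 𝒰 ∈ ℒ such that for every scale 𝒱 ∈ ℒ there is n(𝒱) ∈ ℕ such that for every V ∈ 𝒱 there exists at least one 𝒰-net of V with at most n(𝒱) elements. -/
open Set

variable {X Y : Type*}

/-- Every subset admits a `U`-net, by Zorn's lemma. -/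
lemma exists_isNet (U : Set (Set X)) (W : Set X) : ∃ B : Set X, IsNet U W B := by
  have hz : ∀ c ⊆ {B : Set X | B ⊆ W ∧ NoTwo U B}, IsChain (· ⊆ ·) c →
      ∃ ub ∈ {B : Set X | B ⊆ W ∧ NoTwo U B}, ∀ s ∈ c, s ⊆ ub := by
    intro c hcS hchain
    refine ⟨⋃₀ c, ⟨?_, ?_⟩, fun s hs => subset_sUnion_of_mem hs⟩
    · exact sUnion_subset fun s hs => (hcS hs).1
    · rintro x ⟨s, hs, hxs⟩ y ⟨t, ht, hyt⟩ hxy A hA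
      rcases hchain.total hs ht with h | h
      · exact (hcS ht).2 x (h hxs) y hyt hxy A hA
      · exact (hcS hs).2 x hxs y (h hyt) hxy A hA
  obtain ⟨B, hB⟩ := zorn_subset {B : Set X | B ⊆ W ∧ NoTwo U B} hz
  refine ⟨B, hB.prop.1, hB.prop.2, fun B' hBB' hB'W hB'nt => ?_⟩
  exact subset_antisymm (hB.2 ⟨hB'W, hB'nt⟩ hBB') hBB'

/-- Bounded scale measure (at some scale) is equivalent to the existence of a
uniformly bounded scale `U` so that each element of each uniformly bounded scale
admits at least one `U`-net of bounded cardinality. -/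
theorem bsm_iff_exists_net (L : LSS X) :
    (∃ U : Set (Set X), BSMat L U) ↔
      (∃ U : Set (Set X), U ∈ L.fam ∧ ∀ V ∈ L.fam, ∃ n : ℕ, ∀ W ∈ V,
        ∃ B : Set X, IsNet U W B ∧ B.Finite ∧ B.ncard ≤ n) := by
  constructor
  · rintro ⟨U, hUfam, hU⟩
    refine ⟨U, hUfam, fun V hV => ?_⟩
    obtain ⟨n, hn⟩ := hU V hV
    refine ⟨n, fun W hW => ?_⟩
    obtain ⟨B, hB⟩ := exists_isNet U W
    exact ⟨B, hB, hn W hW B hB⟩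
  · rintro ⟨U, hUfam, hU⟩
    refine ⟨stF U U, L.star U hUfam U hUfam, fun V hV => ?_⟩
    obtain ⟨n, hn⟩ := hU V hV
    refine ⟨n, fun W hW B hB => ?_⟩
    obtain ⟨B₀, hB₀net, hB₀fin, hB₀card⟩ := hn W hW
    -- every point of W is "close" (within U) to a point of B₀
    have key : ∀ x ∈ W, ∃ b ∈ B₀, x = b ∨ ∃ A ∈ U, x ∈ A ∧ b ∈ A := by
      intro x hxW
      by_cases hx : x ∈ B₀
      · exact ⟨x, hx, Or.inl rfl⟩
      · by_contra hcon
        push_neg at hcon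
        have hne : B₀ ∪ {x} ≠ B₀ := by
          intro h
          exact hx (h ▸ (mem_union_right _ rfl : x ∈ B₀ ∪ {x}))
        have := hB₀net.2.2 (B₀ ∪ {x}) subset_union_left
          (union_subset hB₀net.1 (singleton_subset_iff.mpr hxW)) ?_
        · exact hne this
        · rintro p (hp | hp) q (hq | hq) hpq A hA ⟨hpA, hqA⟩
          · exact hB₀net.2.1 p hp q hq hpq A hA ⟨hpA, hqA⟩
          · rcases hq with rfl
            exact (hcon p hp).2 A hA hqA hpA
          · rcases hp with rfl
            exact (hcon q hq).2 A hA hpA hqA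
          · rcases hp with rfl; rcases hq with rfl; exact hpq rfl
    -- choose for each x ∈ B a nearby b ∈ B₀
    have hBW : B ⊆ W := hB.1
    classical
    choose! f hf1 hf2 using key
    have hmaps : ∀ x ∈ B, f x ∈ B₀ := fun x hx => hf1 x (hBW hx)
    have hinj : Set.InjOn f B := by
      intro x hx y hy hfxy
      by_contra hxy
      -- x and y both lie in a common element of stF U U
      have hx' := hf2 x (hBW hx)
      have hy' := hf2 y (hBW hy)
      -- produce A ∈ U containing x with f x ∈ A (or x = f x, use A from y)
      obtain ⟨Ax, hAxU, hxAx, hbAx⟩ : ∃ A ∈ U, x ∈ A ∧ f x ∈ A := by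
        rcases hx' with h | h
        · rcases hy' with h' | ⟨A, hAU, hyA, hbA⟩
          · exact absurd ((h.trans hfxy).trans h'.symm) hxy
          · exact ⟨A, hAU, h ▸ hfxy ▸ hbA, hfxy ▸ hbA⟩
        · exact h
      obtain ⟨Ay, hAyU, hyAy, hbAy⟩ : ∃ A ∈ U, y ∈ A ∧ f x ∈ A := by
        rcases hy' with h | ⟨A, hAU, hyA, hbA⟩
        · exact ⟨Ax, hAxU, h ▸ hfxy ▸ hbAx, hbAx⟩
        · exact ⟨A, hAU, hyA, hfxy ▸ hbA⟩
      -- x, y ∈ stA Ax U ∈ stF U U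
      have hst : stA Ax U ∈ stF U U := ⟨Ax, hAxU, rfl⟩
      have hxst : x ∈ stA Ax U := ⟨Ax, ⟨hAxU, ⟨x, hxAx, hxAx⟩⟩, hxAx⟩
      have hyst : y ∈ stA Ax U := ⟨Ay, ⟨hAyU, ⟨f x, hbAy, hbAx⟩⟩, hyAy⟩
      exact hB.2.1 x hx y hy hxy _ hst ⟨hxst, hyst⟩
    have hfin : B.Finite :=
      Set.Finite.of_finite_image (hB₀fin.subset (image_subset_iff.mpr hmaps)) hinj
    exact ⟨hfin, le_trans (Set.ncard_le_ncard_of_injOn f hmaps hinj hB₀fin) hB₀card⟩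
end

section
/- If f : X → Y is a coarse equivalence of large scale spaces and (Y, ℒ_Y) has bounded scale measure at scale 𝒰, then (X, ℒ_X) has bounded scale measure at scale f⁻¹(𝒰) = {f⁻¹(U) : U ∈ 𝒰}. -/
open Set

variable {X Y : Type*}

/-- The image of a family of subsets under `f`. -/
def imFam (f : X → Y) (U : Set (Set X)) : Set (Set Y) := (Set.image f) '' U

/-- The preimage of a family of subsets under `f`. -/
def preFam (f : X → Y) (V : Set (Set Y)) : Set (Set X) := (Set.preimage f) '' V

/-- `f` is large scale continuous (bornologous). -/
def LSContinuous (LX : LSS X) (LY : LSS Y) (f : X → Y) : Prop :=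
  ∀ U ∈ LX.fam, imFam f U ∈ LY.fam

/-- Two maps into `Y` are close. -/
def Close (LY : LSS Y) (f g : X → Y) : Prop :=
  ∃ V ∈ LY.fam, ∀ x : X, ∃ W ∈ V, f x ∈ W ∧ g x ∈ W

/-- `f` is a coarse equivalence. -/
def CoarseEquiv (LX : LSS X) (LY : LSS Y) (f : X → Y) : Prop :=
  LSContinuous LX LY f ∧ ∃ g : Y → X, LSContinuous LY LX g ∧
    Close LY (f ∘ g) id ∧ Close LX (g ∘ f) id

/-- If `f : X → Y` is a coarse equivalence and `Y` has bounded scale measure at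
scale `U`, then `X` has bounded scale measure at the scale `f⁻¹(U)`. -/
theorem bsm_coarse_invariant_inv (LX : LSS X) (LY : LSS Y) (f : X → Y)
    (hf : CoarseEquiv LX LY f) (U : Set (Set Y)) (h : BSMcov LY U) :
    BSMcov LX (preFam f U) := by
  obtain ⟨hU, hcov⟩ := h
  obtain ⟨hfc, g, hgc, _, ⟨V₀, hV₀, hclose⟩⟩ := hf
  constructor
  · have hgU : imFam g U ∈ LX.fam := hgc U hU
    have hstar : stF (imFam g U) V₀ ∈ LX.fam := LX.star _ hgU _ hV₀
    refine LX.refine _ _ hstar ?_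
    rintro A ⟨B, hB, rfl⟩ _
    refine ⟨stA (g '' B) V₀, ⟨g '' B, ⟨B, hB, rfl⟩, rfl⟩, ?_⟩
    intro x hx
    obtain ⟨W, hW, hgfx, hxW⟩ := hclose x
    exact ⟨W, ⟨hW, ⟨g (f x), hgfx, ⟨f x, hx, rfl⟩⟩⟩, hxW⟩
  · intro V hV
    obtain ⟨k, hk⟩ := hcov (imFam f V) (hfc V hV)
    refine ⟨k, fun W hW => ?_⟩
    obtain ⟨F, hFU, hFc, hFcov⟩ := hk (f '' W) ⟨W, hW, rfl⟩
    classical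
    refine ⟨F.image (Set.preimage f), ?_, ?_, ?_⟩
    · intro A hA
      simp only [Finset.coe_image, Set.mem_image] at hA
      obtain ⟨B, hB, rfl⟩ := hA
      exact ⟨B, hFU hB, rfl⟩
    · exact Finset.card_image_le.trans hFc
    · intro x hx
      obtain ⟨B, hB, hfx⟩ := hFcov ⟨x, hx, rfl⟩
      exact ⟨f ⁻¹' B, by simpa using ⟨B, hB, rfl⟩, hfx⟩
end

section
/- Let G be a group with a proper left-invariant metric d and let ℒ be the large scale structure induced by d. Then (G, ℒ) has bounded scale measure at the scale of open R-balls for any R > 0. -/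
open Set Metric

/-- A group with a proper left-invariant metric has bounded scale measure at the
scale of open `R`-balls for any `R > 0`: every uniformly bounded family (family of
sets of uniformly bounded diameter) has each of its members covered by a bounded
number of open `R`-balls. -/
theorem group_proper_metric_bsm (G : Type*) [Group G] [MetricSpace G] [ProperSpace G]
    (hinv : ∀ k g h : G, dist (k * g) (k * h) = dist g h) (R : ℝ) (hR : 0 < R) :
    ∀ V : Set (Set G), (∃ C : ℝ, ∀ A ∈ V, ∀ x ∈ A, ∀ y ∈ A, dist x y ≤ C) →
      ∃ k : ℕ, ∀ W ∈ V, ∃ F : Finset G, F.card ≤ k ∧ W ⊆ ⋃ g ∈ F, Metric.ball g R := by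
  classical
  rintro V ⟨C, hC⟩
  obtain ⟨t, -, htfin, htcov⟩ :=
    (isCompact_closedBall (1 : G) C).finite_cover_balls hR
  refine ⟨htfin.toFinset.card, fun W hW => ?_⟩
  rcases W.eq_empty_or_nonempty with rfl | ⟨x₀, hx₀⟩
  · exact ⟨∅, by simp⟩
  refine ⟨htfin.toFinset.image (fun g => x₀ * g), Finset.card_image_le, fun x hx => ?_⟩
  have hxK : x₀⁻¹ * x ∈ closedBall (1 : G) C := by
    rw [mem_closedBall]
    calc dist (x₀⁻¹ * x) 1 = dist (x₀ * (x₀⁻¹ * x)) (x₀ * 1) := (hinv x₀ _ _).symm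
    _ = dist x x₀ := by simp [mul_inv_cancel_left]
    _ ≤ C := hC W hW x hx x₀ hx₀
  obtain ⟨g, hg, hgball⟩ := by
    simpa only [mem_iUnion, exists_prop] using htcov hxK
  refine mem_iUnion₂.2 ⟨x₀ * g, Finset.mem_image_of_mem _ (htfin.mem_toFinset.2 hg), ?_⟩
  rw [mem_ball]
  calc dist x (x₀ * g) = dist (x₀ * (x₀⁻¹ * x)) (x₀ * g) := by simp [mul_inv_cancel_left]
  _ = dist (x₀⁻¹ * x) g := hinv x₀ _ _
  _ < R := hgball
end

section
/- Let (X, ℒ_X) and (Y, ℒ_Y) be large scale spaces with bounded geometry and f : X → Y a coarse equivalence such that sup_{y∈Y} |f⁻¹(y)| = N < ∞. If (Y, ℒ_Y) has property A, then (X, ℒ_X) has property A. -/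
open Set

variable {X Y : Type*}

/-- Bounded geometry: each uniformly bounded family has a uniform finite bound
on the cardinalities of its members. -/
def BoundedGeometry (L : LSS X) : Prop :=
  ∀ U ∈ L.fam, ∃ n : ℕ, ∀ A ∈ U, A.Finite ∧ A.ncard ≤ n

/-- Property A for a large scale space. -/
def PropA (L : LSS X) : Prop :=
  ∀ ε : ℝ, 0 < ε → ∀ U ∈ L.fam, ∃ V ∈ L.fam, ∃ A : X → Set (X × ℕ),
    (∀ x : X, (A x).Finite) ∧
    (∀ x : X, A x ⊆ (stA {x} V) ×ˢ (Set.univ : Set ℕ)) ∧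
    (∀ x : X, (x, 1) ∈ A x) ∧
    ∀ x y : X, y ∈ stA {x} U →
      ((symmDiff (A x) (A y)).ncard : ℝ) < ε * ((A x ∩ A y).ncard : ℝ)

lemma preimage_finite_ncard_le {A B : Type*} (h : A → B) (N : ℕ)
    (hfib : ∀ b : B, (h ⁻¹' {b}).Finite ∧ (h ⁻¹' {b}).ncard ≤ N)
    {T : Set B} (hT : T.Finite) :
    (h ⁻¹' T).Finite ∧ (h ⁻¹' T).ncard ≤ N * T.ncard := by
  refine Set.Finite.induction_on (motive := fun T _ => (h ⁻¹' T).Finite ∧ (h ⁻¹' T).ncard ≤ N * T.ncard)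
    T hT (by simp) ?_
  intro b T hb hTfin ih
  have hpre : h ⁻¹' insert b T = h ⁻¹' {b} ∪ h ⁻¹' T := by
    rw [← Set.singleton_union, Set.preimage_union]
  constructor
  · rw [hpre]; exact (hfib b).1.union ih.1
  · rw [hpre, Set.ncard_insert_of_notMem hb hTfin, Nat.mul_add, Nat.mul_one]
    calc (h ⁻¹' {b} ∪ h ⁻¹' T).ncard ≤ (h ⁻¹' {b}).ncard + (h ⁻¹' T).ncard :=
          Set.ncard_union_le _ _
      _ ≤ N + N * T.ncard := Nat.add_le_add (hfib b).2 ih.2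
      _ = N * T.ncard + N := Nat.add_comm _ _

lemma ncard_le_mul_image {A B : Type*} (h : A → B) (M : ℕ)
    (hfib : ∀ b : B, (h ⁻¹' {b}).Finite ∧ (h ⁻¹' {b}).ncard ≤ M)
    {S : Set A} (hS : S.Finite) : S.ncard ≤ M * (h '' S).ncard := by
  calc S.ncard ≤ (h ⁻¹' (h '' S)).ncard :=
        Set.ncard_le_ncard (Set.subset_preimage_image h S)
          (preimage_finite_ncard_le h M hfib (hS.image h)).1
    _ ≤ M * (h '' S).ncard := (preimage_finite_ncard_le h M hfib (hS.image h)).2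

lemma le_ncard_preimage {A B : Type*} (h : A → B) {T : Set B} (hT : T ⊆ Set.range h)
    (hfin : (h ⁻¹' T).Finite) : T.ncard ≤ (h ⁻¹' T).ncard := by
  conv_lhs => rw [← Set.image_preimage_eq_of_subset hT]
  exact Set.ncard_image_le hfin

lemma image_symmDiff_subset {A B : Type*} (h : A → B) (S T : Set A) :
    symmDiff (h '' S) (h '' T) ⊆ h '' (symmDiff S T) := by
  rw [Set.symmDiff_def, Set.symmDiff_def]
  rintro b (⟨⟨a, ha, rfl⟩, hb⟩ | ⟨⟨a, ha, rfl⟩, hb⟩)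
  · exact ⟨a, Or.inl ⟨ha, fun h' => hb ⟨a, h', rfl⟩⟩, rfl⟩
  · exact ⟨a, Or.inr ⟨ha, fun h' => hb ⟨a, h', rfl⟩⟩, rfl⟩

lemma preimage_symmDiff' {A B : Type*} (h : A → B) (S T : Set B) :
    h ⁻¹' (symmDiff S T) = symmDiff (h ⁻¹' S) (h ⁻¹' T) := by
  rw [Set.symmDiff_def, Set.symmDiff_def, Set.preimage_union, Set.preimage_diff,
    Set.preimage_diff]

/-- Property A is inherited along a coarse equivalence with uniformly finite
fibers between spaces with bounded geometry. -/
theorem propA_coarse_invariant (LX : LSS X) (LY : LSS Y)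
    (hbgX : BoundedGeometry LX) (hbgY : BoundedGeometry LY)
    (f : X → Y) (hf : CoarseEquiv LX LY f) (N : ℕ)
    (hN : ∀ y : Y, (f ⁻¹' {y}).Finite ∧ (f ⁻¹' {y}).ncard ≤ N)
    (hA : PropA LY) : PropA LX := by
  classical
  intro ε hε U hU
  obtain ⟨hfc, g, hg, ⟨V'', hV'', hclose⟩, hgfC⟩ := hf
  have hVXmem : ∀ W ∈ LY.fam, preFam f W ∈ LX.fam := by
    intro W hW
    obtain ⟨C, hC, hCc⟩ := hgfC
    refine LX.refine _ (stF (imFam g W) C) (LX.star _ (hg W hW) _ hC) ?_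
    rintro _ ⟨W', hW', rfl⟩ _
    refine ⟨stA (g '' W') C, ⟨g '' W', ⟨W', hW', rfl⟩, rfl⟩, ?_⟩
    intro z hz
    obtain ⟨E, hE, hgE, hzE⟩ := hCc z
    exact ⟨E, ⟨hE, ⟨g (f z), hgE, ⟨f z, hz, rfl⟩⟩⟩, hzE⟩
  -- handle the empty case
  rcases isEmpty_or_nonempty X with hXe | ⟨⟨x0⟩⟩
  · obtain ⟨V, hV⟩ := LX.nonempty
    exact ⟨V, hV, fun _ => ∅, fun x => (hXe.false x).elim, fun x => (hXe.false x).elim,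
      fun x => (hXe.false x).elim, fun x => (hXe.false x).elim⟩
  have hN1 : 1 ≤ N := by
    have hx0 : x0 ∈ f ⁻¹' {f x0} := rfl
    have := (hN (f x0)).2
    have h1 : 0 < (f ⁻¹' {f x0}).ncard :=
      (Set.ncard_pos (hN (f x0)).1).mpr ⟨x0, hx0⟩
    omega
  -- the retraction r onto the range of f
  set r : Y → Y := fun y => if h : ∃ x, f x = y then y else f (g y) with hr
  have hrange : ∀ y, r y ∈ Set.range f := by
    intro y
    by_cases h : ∃ x, f x = y
    · simpa [hr, h] using h
    · simp [hr, h]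
  have hrclose : ∀ y, ∃ W ∈ V'', y ∈ W ∧ r y ∈ W := by
    intro y
    obtain ⟨W, hW, hfgW, hyW⟩ := hclose y
    by_cases h : ∃ x, f x = y
    · refine ⟨W, hW, hyW, ?_⟩
      simp only [hr]
      rw [dif_pos h]
      exact hyW
    · exact ⟨W, hW, hyW, by simp only [hr]; rw [dif_neg h]; exact hfgW⟩
  have hrf : ∀ x, r (f x) = f x := fun x => dif_pos ⟨x, rfl⟩
  -- bound M on fibers of r
  have hSF : {S : Set Y | ∃ w, S = {w}} ∈ LY.fam := by
    refine LY.refine _ V'' hV'' ?_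
    rintro A ⟨w, rfl⟩ ⟨a, ha, b, hb, hab⟩
    exact absurd (ha.trans hb.symm) hab
  have hstarS := LY.star _ hSF _ hV''
  obtain ⟨M0, hM0⟩ := hbgY _ hstarS
  set M := M0 + 1 with hM
  have hrfib : ∀ w : Y, (r ⁻¹' {w}).Finite ∧ (r ⁻¹' {w}).ncard ≤ M := by
    intro w
    have hsub : r ⁻¹' {w} ⊆ stA {w} V'' := by
      intro z hz
      obtain ⟨W, hW, hzW, hrzW⟩ := hrclose z
      have : r z = w := hz
      exact ⟨W, ⟨hW, ⟨w, this ▸ hrzW, rfl⟩⟩, hzW⟩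
    have hmem : stA {w} V'' ∈ stF {S : Set Y | ∃ w, S = {w}} V'' :=
      ⟨{w}, ⟨w, rfl⟩, rfl⟩
    obtain ⟨hfin, hle⟩ := hM0 _ hmem
    exact ⟨hfin.subset hsub, le_trans (Set.ncard_le_ncard hsub hfin) (by omega)⟩
  -- apply property A of Y
  have hNM : (0 : ℝ) < (N : ℝ) * (M : ℝ) := by positivity
  have hε' : 0 < ε / ((N : ℝ) * M) := div_pos hε hNM
  obtain ⟨V', hV', B, hBfin, hBsub, hBmem, hBest⟩ :=
    hA (ε / ((N : ℝ) * M)) hε' (imFam f U) (hfc U hU)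
  -- the maps on product spaces
  set fb : X × ℕ → Y × ℕ := Prod.map f id with hfb
  set rb : Y × ℕ → Y × ℕ := Prod.map r id with hrb
  have hfbfib : ∀ p : Y × ℕ, (fb ⁻¹' {p}).Finite ∧ (fb ⁻¹' {p}).ncard ≤ N := by
    rintro ⟨y, n⟩
    have : fb ⁻¹' {(y, n)} = (fun x => (x, n)) '' (f ⁻¹' {y}) := by
      ext ⟨a, m⟩
      simp only [hfb, Set.mem_preimage, Set.mem_singleton_iff, Prod.map, Prod.ext_iff,
        Set.mem_image, id]
      aesop
    rw [this]
    refine ⟨(hN y).1.image _, ?_⟩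
    rw [Set.ncard_image_of_injective _ (fun a b hab => (Prod.ext_iff.mp hab).1)]
    exact (hN y).2
  have hrbfib : ∀ p : Y × ℕ, (rb ⁻¹' {p}).Finite ∧ (rb ⁻¹' {p}).ncard ≤ M := by
    rintro ⟨y, n⟩
    have : rb ⁻¹' {(y, n)} = (fun x => (x, n)) '' (r ⁻¹' {y}) := by
      ext ⟨a, m⟩
      simp only [hrb, Set.mem_preimage, Set.mem_singleton_iff, Prod.map, Prod.ext_iff,
        Set.mem_image, id]
      aesop
    rw [this]
    refine ⟨(hrfib y).1.image _, ?_⟩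
    rw [Set.ncard_image_of_injective _ (fun a b hab => (Prod.ext_iff.mp hab).1)]
    exact (hrfib y).2
  -- the sets A
  set Afun : X → Set (X × ℕ) := fun x => fb ⁻¹' (rb '' (B (f x))) with hAfun
  have hAfin : ∀ x, (Afun x).Finite := fun x =>
    (preimage_finite_ncard_le fb N hfbfib ((hBfin (f x)).image rb)).1
  refine ⟨preFam f (stF V' V''), hVXmem _ (LY.star _ hV' _ hV''), Afun, hAfin, ?_, ?_, ?_⟩
  · -- support condition
    rintro x ⟨z, n⟩ hz
    obtain ⟨⟨y', n'⟩, hy', heq⟩ := hz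
    obtain ⟨hy1, hn⟩ : r y' = f z ∧ n' = n := by
      constructor
      · exact (Prod.ext_iff.mp heq).1
      · exact (Prod.ext_iff.mp heq).2
    have hy'st : y' ∈ stA {f x} V' := by
      have := hBsub (f x) hy'
      exact this.1
    obtain ⟨W1, ⟨hW1, hW1x⟩, hy'W1⟩ := hy'st
    obtain ⟨W2, hW2, hy'W2, hry'W2⟩ := hrclose y'
    obtain ⟨W3, hW3, hfgW3, hfxW3⟩ := hclose (f x)
    have hfxW1 : f x ∈ W1 := by
      obtain ⟨w, hw1, hw2⟩ := hW1x
      rwa [Set.mem_singleton_iff.mp hw2] at hw1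
    refine ⟨?_, trivial⟩
    show z ∈ stA {x} (preFam f (stF V' V''))
    have hfzst : f z ∈ stA W1 V'' := ⟨W2, ⟨hW2, ⟨y', hy'W2, hy'W1⟩⟩, hy1 ▸ hry'W2⟩
    have hfxst : f x ∈ stA W1 V'' := ⟨W3, ⟨hW3, ⟨f x, hfxW3, hfxW1⟩⟩, hfxW3⟩
    exact ⟨f ⁻¹' (stA W1 V''), ⟨⟨stA W1 V'', ⟨W1, hW1, rfl⟩, rfl⟩, ⟨x, hfxst, rfl⟩⟩, hfzst⟩
  · -- (x,1) ∈ A x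
    intro x
    refine ⟨(f x, 1), hBmem (f x), ?_⟩
    simp [hrb, hfb, hrf x]
  · -- the estimate
    intro x y hy
    obtain ⟨A0, ⟨hA0, hA0x⟩, hyA0⟩ := hy
    have hxA0 : x ∈ A0 := by
      obtain ⟨w, hw1, hw2⟩ := hA0x
      rwa [Set.mem_singleton_iff.mp hw2] at hw1
    have hfyst : f y ∈ stA {f x} (imFam f U) :=
      ⟨f '' A0, ⟨⟨A0, hA0, rfl⟩, ⟨f x, ⟨x, hxA0, rfl⟩, rfl⟩⟩, ⟨y, hyA0, rfl⟩⟩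
    have hYest := hBest (f x) (f y) hfyst
    set Bx := B (f x)
    set By := B (f y)
    have hBxfin := hBfin (f x)
    have hByfin := hBfin (f y)
    -- notation for cardinalities
    set aD := (symmDiff (Afun x) (Afun y)).ncard
    set aI := ((Afun x) ∩ (Afun y)).ncard
    have hsdfin : (symmDiff Bx By).Finite := by
      rw [Set.symmDiff_def]
      exact (hBxfin.diff).union (hByfin.diff)
    set bD := (symmDiff Bx By).ncard
    set bI := (Bx ∩ By).ncard
    -- upper bound on symmetric difference
    have haD : aD ≤ N * bD := by
      have h1 : symmDiff (Afun x) (Afun y) ⊆ fb ⁻¹' (rb '' (symmDiff Bx By)) := by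
        rw [hAfun]
        show symmDiff (fb ⁻¹' (rb '' Bx)) (fb ⁻¹' (rb '' By)) ⊆ _
        rw [← preimage_symmDiff']
        exact Set.preimage_mono (image_symmDiff_subset rb Bx By)
      have hfin2 := preimage_finite_ncard_le fb N hfbfib
        (hsdfin.image rb)
      calc aD ≤ (fb ⁻¹' (rb '' (symmDiff Bx By))).ncard :=
            Set.ncard_le_ncard h1 hfin2.1
        _ ≤ N * (rb '' (symmDiff Bx By)).ncard := hfin2.2
        _ ≤ N * (symmDiff Bx By).ncard :=
            Nat.mul_le_mul_left N (Set.ncard_image_le hsdfin)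
    -- lower bound on intersection
    have hbI : bI ≤ M * aI := by
      have h1 : fb ⁻¹' (rb '' (Bx ∩ By)) ⊆ Afun x ∩ Afun y := by
        rw [hAfun]
        refine Set.subset_inter ?_ ?_
        · exact Set.preimage_mono (Set.image_mono Set.inter_subset_left)
        · exact Set.preimage_mono (Set.image_mono Set.inter_subset_right)
      have hfinI : (Afun x ∩ Afun y).Finite := (hAfin x).subset Set.inter_subset_left
      have hrangeb : rb '' (Bx ∩ By) ⊆ Set.range fb := by
        rintro _ ⟨⟨y', n'⟩, _, rfl⟩
        obtain ⟨x', hx'⟩ := hrange y'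
        exact ⟨(x', n'), by simp [hfb, hrb, hx']⟩
      have hfinpre : (fb ⁻¹' (rb '' (Bx ∩ By))).Finite :=
        hfinI.subset h1
      calc bI ≤ M * (rb '' (Bx ∩ By)).ncard :=
            ncard_le_mul_image rb M hrbfib (hBxfin.subset Set.inter_subset_left)
        _ ≤ M * (fb ⁻¹' (rb '' (Bx ∩ By))).ncard :=
            Nat.mul_le_mul_left M (le_ncard_preimage fb hrangeb hfinpre)
        _ ≤ M * aI := Nat.mul_le_mul_left M (Set.ncard_le_ncard h1 hfinI)
    -- combine
    have hNpos : (0 : ℝ) < N := by exact_mod_cast Nat.lt_of_lt_of_le Nat.zero_lt_one hN1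
    have hMpos : (0 : ℝ) < M := by positivity
    have haDR : (aD : ℝ) ≤ (N : ℝ) * bD := by exact_mod_cast haD
    have hbIR : (bI : ℝ) ≤ (M : ℝ) * aI := by exact_mod_cast hbI
    have hfinal : (aD : ℝ) < ε * aI := by
      have h2 : (N : ℝ) * bD < (N : ℝ) * ((ε / ((N : ℝ) * M)) * bI) := by
        exact (mul_lt_mul_iff_right₀ hNpos).mpr hYest
      have h3 : (N : ℝ) * ((ε / ((N : ℝ) * M)) * bI) ≤
          (N : ℝ) * ((ε / ((N : ℝ) * M)) * ((M : ℝ) * aI)) := by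
        have hc : (0 : ℝ) ≤ ε / ((N : ℝ) * M) := le_of_lt hε'
        exact mul_le_mul_of_nonneg_left
          (mul_le_mul_of_nonneg_left hbIR hc) (le_of_lt hNpos)
      have h4 : (N : ℝ) * ((ε / ((N : ℝ) * M)) * ((M : ℝ) * aI)) = ε * aI := by
        field_simp
      linarith
    exact hfinal
end

section
/- Every large scale space (X, ℒ) of finite asymptotic dimension has property A. -/
open Set

variable {X Y : Type*}

/-- `asdim(X, L) ≤ k`: every uniformly bounded cover admits a uniformly bounded
coarsening of multiplicity at most `k + 1`. -/
def AsdimLE (L : LSS X) (k : ℕ) : Prop :=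
  ∀ U ∈ L.fam, ⋃₀ U = Set.univ → ∃ V ∈ L.fam, ⋃₀ V = Set.univ ∧
    (∀ A ∈ U, ∃ B ∈ V, A ⊆ B) ∧
    ∀ x : X, {B ∈ V | x ∈ B}.Finite ∧ {B ∈ V | x ∈ B}.ncard ≤ k + 1

section Helpers

open scoped symmDiff

/-- The "staircase" finite set attached to a finitely supported `ℕ`-valued function. -/
noncomputable def Efin {X : Type*} [DecidableEq X] (h : X →₀ ℕ) : Finset (X × ℕ) :=
  h.support.biUnion fun z => {z} ×ˢ Finset.Icc 1 (h z)

lemma mem_Efin {X : Type*} [DecidableEq X] (h : X →₀ ℕ) (p : X × ℕ) :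
    p ∈ Efin h ↔ 1 ≤ p.2 ∧ p.2 ≤ h p.1 := by
  simp only [Efin, Finset.mem_biUnion, Finsupp.mem_support_iff, Finset.mem_product,
    Finset.mem_singleton, Finset.mem_Icc]
  constructor
  · rintro ⟨z, hz, h1, h2, h3⟩
    subst h1; exact ⟨h2, h3⟩
  · rintro ⟨h1, h2⟩
    exact ⟨p.1, fun h0 => by omega, rfl, h1, h2⟩

lemma card_Efin {X : Type*} [DecidableEq X] (h : X →₀ ℕ) :
    (Efin h).card = ∑ z ∈ h.support, h z := by
  rw [Efin, Finset.card_biUnion]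
  · exact Finset.sum_congr rfl fun z _ => by simp [Nat.card_Icc]
  · intro z _ w _ hzw
    simp only [Finset.disjoint_left, Finset.mem_product, Finset.mem_singleton]
    rintro p ⟨rfl, -⟩ ⟨rfl, -⟩
    exact hzw rfl

lemma mem_stA' {X : Type*} {U : Set (Set X)} {V : Set X} {z : X} :
    z ∈ stA V U ↔ ∃ A, A ∈ U ∧ (A ∩ V).Nonempty ∧ z ∈ A := by
  simp only [stA, Set.mem_sUnion, Set.mem_setOf_eq]
  tauto

lemma stA_mono_left {X : Type*} (U : Set (Set X)) {V W : Set X} (h : V ⊆ W) :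
    stA V U ⊆ stA W U := by
  intro z hz
  rw [mem_stA'] at hz ⊢
  obtain ⟨A, hA, ⟨w, hw1, hw2⟩, hz⟩ := hz
  exact ⟨A, hA, ⟨w, hw1, h hw2⟩, hz⟩

lemma stA_mono_right {X : Type*} {U U' : Set (Set X)} (h : U ⊆ U') (V : Set X) :
    stA V U ⊆ stA V U' := by
  intro z hz
  rw [mem_stA'] at hz ⊢
  obtain ⟨A, hA, hne, hz⟩ := hz
  exact ⟨A, h hA, hne, hz⟩

end Helpers

open scoped symmDiff

/-- A large scale space of finite asymptotic dimension has property A. -/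
theorem asdim_finite_propA (L : LSS X) (h : ∃ k : ℕ, AsdimLE L k) : PropA L := by
  classical
  obtain ⟨k, hk⟩ := h
  intro ε hε U hU
  rcases isEmpty_or_nonempty X with hX | hX
  · obtain ⟨V, hV⟩ := L.nonempty
    exact ⟨V, hV, fun _ => ∅, fun x => (hX.false x).elim, fun x => (hX.false x).elim,
      fun x => (hX.false x).elim, fun x => (hX.false x).elim⟩
  -- the enlarged family `U'` containing all singletons
  set U' : Set (Set X) := U ∪ Set.range (fun x : X => ({x} : Set X)) with hU'def
  have hUU' : U ⊆ U' := Set.subset_union_left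
  have hsing : ∀ z : X, ({z} : Set X) ∈ U' := fun z => Set.mem_union_right _ ⟨z, rfl⟩
  have hU' : U' ∈ L.fam := by
    refine L.refine U' U hU ?_
    rintro A (hA | ⟨x, rfl⟩) h2
    · exact ⟨A, hA, subset_rfl⟩
    · obtain ⟨a, ha, b, hb, hab⟩ := h2
      simp only [Set.mem_singleton_iff] at ha hb
      exact absurd (ha.trans hb.symm) hab
  -- the iterated star operation
  set T : ℕ → X → Set X := fun j x => (fun S => stA S U')^[j] {x} with hTdef
  have hTzero : ∀ x, T 0 x = {x} := fun x => rfl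
  have hTsucc : ∀ j x, T (j + 1) x = stA (T j x) U' := by
    intro j x
    simp only [hTdef]
    rw [Function.iterate_succ_apply']
  have hexp : ∀ S : Set X, S ⊆ stA S U' := by
    intro S z hz
    rw [mem_stA']
    exact ⟨{z}, hsing z, ⟨z, rfl, hz⟩, rfl⟩
  have hTmono : ∀ x, Monotone fun j => T j x := by
    intro x
    refine monotone_nat_of_le_succ fun j => ?_
    rw [hTsucc]
    exact hexp _
  have hxT : ∀ j x, x ∈ T j x := by
    intro j x
    exact hTmono x (Nat.zero_le j) rfl
  have hTstep : ∀ x y, y ∈ T 1 x → ∀ j, T j y ⊆ T (j + 1) x := by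
    intro x y hy j
    induction j with
    | zero =>
      rw [hTzero]
      exact fun z hz => by rwa [Set.mem_singleton_iff.mp hz]
    | succ j ih =>
      rw [hTsucc, hTsucc]
      exact stA_mono_left U' ih
  -- the uniformly bounded covers `W j`
  set W : ℕ → Set (Set X) := fun j => Set.range (fun x => T j x) with hWdef
  have hW : ∀ j, W j ∈ L.fam := by
    intro j
    induction j with
    | zero =>
      obtain ⟨V₀, hV₀⟩ := L.nonempty
      refine L.refine _ V₀ hV₀ ?_
      rintro A ⟨x, rfl⟩ ⟨a, ha, b, hb, hab⟩
      simp only [hTzero, Set.mem_singleton_iff] at ha hb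
      exact absurd (ha.trans hb.symm) hab
    | succ j ih =>
      have : W (j + 1) = stF (W j) U' := by
        show Set.range (fun x => T (j + 1) x) = stF (Set.range fun x => T j x) U'
        rw [stF, ← Set.range_comp]
        exact congrArg _ (funext fun x => hTsucc j x)
      rw [this]
      exact L.star _ ih _ hU'
  -- the scale parameter
  set N : ℕ := ⌈((k : ℝ) + 3) / ε⌉₊ with hNdef
  set m : ℕ := k + 3 + N with hmdef
  have hWcov : ⋃₀ W m = Set.univ := by
    ext z
    simp only [Set.mem_univ, iff_true, Set.mem_sUnion]
    exact ⟨T m z, ⟨z, rfl⟩, hxT m z⟩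
  obtain ⟨V, hV, hVcov, hVco, hVmult⟩ := hk (W m) (hW m) hWcov
  -- the finite set of members of `V` containing a given point
  set Sx : X → Finset (Set X) := fun x => (hVmult x).1.toFinset with hSxdef
  have hSx : ∀ x (B : Set X), B ∈ Sx x ↔ B ∈ V ∧ x ∈ B := by
    intro x B
    simp [hSxdef, Set.Finite.mem_toFinset]
  have hSxcard : ∀ x, (Sx x).card ≤ k + 1 := by
    intro x
    have := (hVmult x).2
    rwa [Set.ncard_eq_toFinset_card _ (hVmult x).1] at this
  -- a choice of a point in each (nonempty) member of `V`
  obtain ⟨c, hc⟩ : ∃ c : Set X → X, ∀ B : Set X, B.Nonempty → c B ∈ B :=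
    ⟨fun B => if hB : B.Nonempty then hB.choose else hX.some,
      fun B hB => by
        show (if hB : B.Nonempty then hB.choose else hX.some) ∈ B
        rw [dif_pos hB]; exact hB.choose_spec⟩
  -- depth functions
  set f : X → Set X → ℕ := fun x B => ((Finset.Icc 1 m).filter fun j => T j x ⊆ B).card
    with hfdef
  set g : X → X →₀ ℕ :=
    fun x => Finsupp.single x 1 + ∑ B ∈ Sx x, Finsupp.single (c B) (f x B) with hgdef
  have hg : ∀ x z, g x z =
      (if x = z then 1 else 0) + ∑ B ∈ Sx x, (if c B = z then f x B else 0) := by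
    intro x z
    simp [hgdef, Finsupp.add_apply, Finsupp.finset_sum_apply, Finsupp.single_apply]
  have hgx1 : ∀ x, 1 ≤ g x x := by
    intro x
    rw [hg]
    simp
  refine ⟨V, hV, fun x => ((Efin (g x) : Finset (X × ℕ)) : Set (X × ℕ)), ?_, ?_, ?_, ?_⟩
  · exact fun x => Finset.finite_toSet _
  · -- support condition
    intro x p hp
    rw [Finset.mem_coe, mem_Efin] at hp
    refine Set.mem_prod.mpr ⟨?_, Set.mem_univ _⟩
    have hgz : g x p.1 ≠ 0 := by omega
    rw [hg] at hgz
    by_cases hx1 : x = p.1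
    · subst hx1
      have : p.1 ∈ ⋃₀ V := by rw [hVcov]; exact Set.mem_univ p.1
      obtain ⟨B, hB, hxB⟩ := this
      rw [mem_stA']
      exact ⟨B, hB, ⟨p.1, hxB, rfl⟩, hxB⟩
    · rw [if_neg hx1] at hgz
      simp only [zero_add] at hgz
      obtain ⟨B, hB, hBne⟩ := Finset.exists_ne_zero_of_sum_ne_zero hgz
      have hcB : c B = p.1 := by
        by_contra hcon
        rw [if_neg hcon] at hBne
        exact hBne rfl
      obtain ⟨hBV, hxB⟩ := (hSx x B).mp hB
      rw [mem_stA']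
      exact ⟨B, hBV, ⟨x, hxB, rfl⟩, hcB ▸ hc B ⟨x, hxB⟩⟩
  · -- (x,1) membership
    intro x
    rw [Finset.mem_coe, mem_Efin]
    exact ⟨le_refl 1, hgx1 x⟩
  · -- the main estimate
    intro x y hy
    have hyx : y ∈ T 1 x := by
      rw [hTsucc, hTzero]
      exact stA_mono_right hUU' _ hy
    have hxy : x ∈ T 1 y := by
      rw [mem_stA'] at hy
      obtain ⟨A, hAU, ⟨w, hw1, hw2⟩, hyA⟩ := hy
      rw [Set.mem_singleton_iff] at hw2
      subst hw2
      rw [hTsucc, hTzero, mem_stA']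
      exact ⟨A, hUU' hAU, ⟨y, hyA, rfl⟩, hw1⟩
    have hfzero_x : ∀ B : Set X, y ∉ B → f x B = 0 := by
      intro B hyB
      simp only [hfdef, Finset.card_eq_zero, Finset.filter_eq_empty_iff]
      intro j hj
      rw [Finset.mem_Icc] at hj
      intro hsub
      exact hyB (hsub (hTmono x hj.1 hyx))
    have hfzero_y : ∀ B : Set X, x ∉ B → f y B = 0 := by
      intro B hxB
      simp only [hfdef, Finset.card_eq_zero, Finset.filter_eq_empty_iff]
      intro j hj
      rw [Finset.mem_Icc] at hj
      intro hsub
      exact hxB (hsub (hTmono y hj.1 hxy))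
    have hlip : ∀ (u v : X), v ∈ T 1 u → ∀ B : Set X, f u B ≤ f v B + 1 := by
      intro u v huv B
      have hsub : ((Finset.Icc 1 m).filter fun j => T j u ⊆ B) ⊆
          insert 1 (((Finset.Icc 1 m).filter fun j => T j v ⊆ B).image (· + 1)) := by
        intro j hj
        rw [Finset.mem_filter, Finset.mem_Icc] at hj
        rcases eq_or_ne j 1 with rfl | hj1
        · exact Finset.mem_insert_self _ _
        · refine Finset.mem_insert_of_mem ?_
          rw [Finset.mem_image]
          refine ⟨j - 1, ?_, by omega⟩
          rw [Finset.mem_filter, Finset.mem_Icc]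
          refine ⟨⟨by omega, by omega⟩, ?_⟩
          have : T (j - 1) v ⊆ T (j - 1 + 1) u := hTstep u v huv (j - 1)
          have hj' : j - 1 + 1 = j := by omega
          rw [hj'] at this
          exact this.trans hj.2
      calc f u B ≤ (insert 1 (((Finset.Icc 1 m).filter fun j => T j v ⊆ B).image
            (· + 1))).card := Finset.card_le_card hsub
        _ ≤ (((Finset.Icc 1 m).filter fun j => T j v ⊆ B).image (· + 1)).card + 1 :=
            Finset.card_insert_le _ _
        _ ≤ f v B + 1 := by
            rw [Finset.card_image_of_injective _ (add_left_injective 1)]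
    -- the common core
    set inter : Finset (Set X) := Sx x ∩ Sx y with hinterdef
    set D : X → ℕ := fun z => (if x = z then 1 else 0) + (if y = z then 1 else 0) +
      ∑ B ∈ inter, (if c B = z then 1 else 0) with hDdef
    have hcore : ∀ (u v : X), v ∈ T 1 u → (∀ B : Set X, v ∉ B → f u B = 0) →
        ∀ z, ∑ B ∈ Sx u, (if c B = z then f u B else 0) =
          ∑ B ∈ Sx u ∩ Sx v, (if c B = z then f u B else 0) := by
      intro u v huv hzero z
      refine (Finset.sum_subset Finset.inter_subset_left ?_).symm
      intro B hBu hBnotin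
      have hBv : B ∉ Sx v := fun hBv => hBnotin (Finset.mem_inter.mpr ⟨hBu, hBv⟩)
      rw [hSx] at hBu hBv
      have hvB : v ∉ B := fun hvB => hBv ⟨hBu.1, hvB⟩
      simp [hzero B hvB]
    have hkey : ∀ z, g x z ≤ g y z + D z ∧ g y z ≤ g x z + D z := by
      intro z
      have hcx := hcore x y hyx hfzero_x z
      rw [← hinterdef] at hcx
      have hcy := hcore y x hxy hfzero_y z
      have hIyx : Sx y ∩ Sx x = inter := by rw [hinterdef, Finset.inter_comm]
      rw [hIyx] at hcy
      have hsum1 : ∑ B ∈ inter, (if c B = z then f x B else 0) ≤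
          (∑ B ∈ inter, (if c B = z then f y B else 0)) +
            ∑ B ∈ inter, (if c B = z then 1 else 0) := by
        rw [← Finset.sum_add_distrib]
        refine Finset.sum_le_sum fun B _ => ?_
        by_cases hcb : c B = z
        · simp only [if_pos hcb]; exact hlip x y hyx B
        · simp [if_neg hcb]
      have hsum2 : ∑ B ∈ inter, (if c B = z then f y B else 0) ≤
          (∑ B ∈ inter, (if c B = z then f x B else 0)) +
            ∑ B ∈ inter, (if c B = z then 1 else 0) := by
        rw [← Finset.sum_add_distrib]
        refine Finset.sum_le_sum fun B _ => ?_
        by_cases hcb : c B = z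
        · simp only [if_pos hcb]; exact hlip y x hxy B
        · simp [if_neg hcb]
      rw [hg x z, hg y z, hcx, hcy]
      simp only [hDdef]
      omega
    set s : Finset X := (g x).support ∪ (g y).support with hsdef
    set gmin : X →₀ ℕ := Finsupp.zipWith min (min_self 0) (g x) (g y) with hgmindef
    have hgmin : ∀ z, gmin z = min (g x z) (g y z) := fun z => Finsupp.zipWith_apply
    have hEcap : Efin (g x) ∩ Efin (g y) = Efin gmin := by
      ext p
      simp only [Finset.mem_inter, mem_Efin, hgmin, le_min_iff]
      omega
    have hsumsub : ∀ (h : X →₀ ℕ), h.support ⊆ s → (Efin h).card = ∑ z ∈ s, h z := by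
      intro h hsub
      rw [card_Efin]
      exact Finset.sum_subset hsub fun z _ hz => Finsupp.notMem_support_iff.mp hz
    have hax : (Efin (g x)).card = ∑ z ∈ s, g x z := hsumsub _ Finset.subset_union_left
    have hay : (Efin (g y)).card = ∑ z ∈ s, g y z := hsumsub _ Finset.subset_union_right
    have hacap : (Efin gmin).card = ∑ z ∈ s, min (g x z) (g y z) := by
      rw [hsumsub gmin Finsupp.support_zipWith]
      exact Finset.sum_congr rfl fun z _ => hgmin z
    have hDsum : ∑ z ∈ s, D z ≤ k + 3 := by
      have h1 : ∑ z ∈ s, (if x = z then 1 else 0) ≤ 1 := by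
        rw [Finset.sum_ite_eq]
        split <;> omega
      have h2 : ∑ z ∈ s, (if y = z then 1 else 0) ≤ 1 := by
        rw [Finset.sum_ite_eq]
        split <;> omega
      have h3 : ∑ z ∈ s, ∑ B ∈ inter, (if c B = z then 1 else 0) ≤ k + 1 := by
        rw [Finset.sum_comm]
        calc ∑ B ∈ inter, ∑ z ∈ s, (if c B = z then 1 else 0)
            ≤ ∑ B ∈ inter, 1 := by
              refine Finset.sum_le_sum fun B _ => ?_
              rw [Finset.sum_ite_eq]
              split <;> omega
          _ = inter.card := by rw [Finset.sum_const, smul_eq_mul, mul_one]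
          _ ≤ (Sx x).card := Finset.card_le_card Finset.inter_subset_left
          _ ≤ k + 1 := hSxcard x
      have hsplit : ∑ z ∈ s, D z = (∑ z ∈ s, (if x = z then 1 else 0)) +
          (∑ z ∈ s, (if y = z then 1 else 0)) +
          ∑ z ∈ s, ∑ B ∈ inter, (if c B = z then 1 else 0) := by
        simp only [hDdef, Finset.sum_add_distrib]
      omega
    have hab : (∑ z ∈ s, g x z) + (∑ z ∈ s, g y z) ≤
        2 * (∑ z ∈ s, min (g x z) (g y z)) + (k + 3) := by
      have hz : ∀ z ∈ s, g x z + g y z ≤ 2 * min (g x z) (g y z) + D z := by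
        intro z _
        obtain ⟨h1, h2⟩ := hkey z
        rcases le_total (g x z) (g y z) with hle | hle
        · rw [min_eq_left hle]; omega
        · rw [min_eq_right hle]; omega
      calc (∑ z ∈ s, g x z) + (∑ z ∈ s, g y z) = ∑ z ∈ s, (g x z + g y z) :=
            (Finset.sum_add_distrib).symm
        _ ≤ ∑ z ∈ s, (2 * min (g x z) (g y z) + D z) := Finset.sum_le_sum hz
        _ = 2 * (∑ z ∈ s, min (g x z) (g y z)) + ∑ z ∈ s, D z := by
            rw [Finset.sum_add_distrib, Finset.mul_sum]
        _ ≤ _ := by omega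
    have hca : (∑ z ∈ s, min (g x z) (g y z)) ≤ ∑ z ∈ s, g x z :=
      Finset.sum_le_sum fun z _ => min_le_left _ _
    have hcb : (∑ z ∈ s, min (g x z) (g y z)) ≤ ∑ z ∈ s, g y z :=
      Finset.sum_le_sum fun z _ => min_le_right _ _
    -- lower bound on the total mass of `g x`
    obtain ⟨B₀, hB₀V, hB₀⟩ := hVco (T m x) ⟨x, rfl⟩
    have hB₀Sx : B₀ ∈ Sx x := (hSx x B₀).mpr ⟨hB₀V, hB₀ (hxT m x)⟩
    have hf0 : f x B₀ = m := by
      simp only [hfdef]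
      rw [Finset.filter_true_of_mem, Nat.card_Icc]
      · omega
      · intro j hj
        rw [Finset.mem_Icc] at hj
        exact (hTmono x hj.2).trans hB₀
    have hxs : x ∈ s := Finset.mem_union_left _
      (Finsupp.mem_support_iff.mpr (by have := hgx1 x; omega))
    have hcoreB₀ : ∀ w : X, (if c B₀ = w then f x B₀ else 0) ≤
        ∑ B ∈ Sx x, (if c B = w then f x B else 0) :=
      fun w => Finset.single_le_sum (f := fun B => if c B = w then f x B else 0)
        (fun B _ => Nat.zero_le _) hB₀Sx
    have hm1 : 1 ≤ m := by omega
    have ha_lb : m + 1 ≤ ∑ z ∈ s, g x z := by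
      by_cases hcx0 : c B₀ = x
      · have hgxx : m + 1 ≤ g x x := by
          have h5 := hcoreB₀ x
          rw [if_pos hcx0, hf0] at h5
          rw [hg]
          simp only [eq_self_iff_true, if_true]
          omega
        have h6 : g x x ≤ ∑ z ∈ s, g x z :=
          Finset.single_le_sum (f := fun z => g x z) (fun z _ => Nat.zero_le _) hxs
        omega
      · have hgxc : m ≤ g x (c B₀) := by
          have h5 := hcoreB₀ (c B₀)
          rw [if_pos rfl, hf0] at h5
          rw [hg]
          omega
        have hcs : c B₀ ∈ s := Finset.mem_union_left _
          (Finsupp.mem_support_iff.mpr (by omega))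
        have hpair : g x x + g x (c B₀) ≤ ∑ z ∈ s, g x z := by
          have hsub : ({x, c B₀} : Finset X) ⊆ s := by
            intro z hz
            rcases Finset.mem_insert.mp hz with rfl | hz
            · exact hxs
            · rw [Finset.mem_singleton] at hz; subst hz; exact hcs
          calc g x x + g x (c B₀) = ∑ z ∈ ({x, c B₀} : Finset X), g x z := by
                rw [Finset.sum_pair (fun h => hcx0 h.symm)]
            _ ≤ ∑ z ∈ s, g x z := Finset.sum_le_sum_of_subset hsub
        have h7 := hgx1 x
        omega
    -- cardinality bookkeeping
    have hsd : (Efin (g x) ∆ Efin (g y)).card =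
        ((Efin (g x)) \ (Efin (g y))).card + ((Efin (g y)) \ (Efin (g x))).card := by
      have huni : Efin (g x) ∆ Efin (g y) =
          ((Efin (g x)) \ (Efin (g y))) ∪ ((Efin (g y)) \ (Efin (g x))) := by
        ext p
        simp only [Finset.mem_symmDiff, Finset.mem_union, Finset.mem_sdiff]
      rw [huni]
      exact Finset.card_union_of_disjoint disjoint_sdiff_sdiff
    have e1 := Finset.card_sdiff_add_card_inter (Efin (g x)) (Efin (g y))
    have e2 := Finset.card_sdiff_add_card_inter (Efin (g y)) (Efin (g x))
    rw [Finset.inter_comm] at e2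
    have hcapcard : (Efin (g x) ∩ Efin (g y)).card = ∑ z ∈ s, min (g x z) (g y z) := by
      rw [hEcap, hacap]
    have hsd_le : (Efin (g x) ∆ Efin (g y)).card ≤ k + 3 := by omega
    have hcap_lb : N + 1 ≤ (Efin (g x) ∩ Efin (g y)).card := by omega
    -- pass to the reals
    rw [← Finset.coe_symmDiff, ← Finset.coe_inter, Set.ncard_coe_finset,
      Set.ncard_coe_finset]
    have h1 : ((k : ℝ) + 3) < ε * ((N : ℝ) + 1) := by
      have h2 : ((k : ℝ) + 3) / ε ≤ (N : ℝ) := by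
        rw [hNdef]
        exact Nat.le_ceil _
      rw [div_le_iff₀ hε] at h2
      nlinarith
    calc ((Efin (g x) ∆ Efin (g y)).card : ℝ) ≤ (k : ℝ) + 3 := by
          exact_mod_cast hsd_le
      _ < ε * ((N : ℝ) + 1) := h1
      _ ≤ ε * ((Efin (g x) ∩ Efin (g y)).card : ℝ) := by
          have h3 : ((N : ℝ) + 1) ≤ ((Efin (g x) ∩ Efin (g y)).card : ℝ) := by
            exact_mod_cast hcap_lb
          exact mul_le_mul_of_nonneg_left h3 hε.le
end

section
/- Let (X, ℒ) be a large scale space with bounded geometry and let 𝒞 be the coarse structure induced by ℒ (E ⊆ X×X is controlled iff E ⊆ ⋃_{B∈ℬ} B×B for some ℬ ∈ ℒ). Then (X, 𝒞) has property A in the sense of Sako if and only if (X, ℒ) has property A in the large scale sense. -/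
open Set

variable {X Y : Type*}

/-- The controlled sets of the coarse structure induced by a large scale structure. -/
def Controlled (L : LSS X) (E : Set (X × X)) : Prop :=
  ∃ B ∈ L.fam, E ⊆ ⋃ b ∈ B, b ×ˢ b

/-- Sako's property A for the induced coarse structure. -/
def SakoPropA (L : LSS X) : Prop :=
  ∀ ε : ℝ, 0 < ε → ∀ T : Set (X × X), Controlled L T →
    ∃ S : Set (X × X), Controlled L S ∧ ∃ A : Set (X × X × ℕ),
      (∀ p ∈ A, (p.1, p.2.1) ∈ S) ∧
      (∀ x : X, {q : X × ℕ | (x, q.1, q.2) ∈ A}.Finite) ∧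
      (∀ x : X, (x, x, 1) ∈ A) ∧
      ∀ x y : X, (x, y) ∈ T →
        ((symmDiff {q : X × ℕ | (x, q.1, q.2) ∈ A}
            {q : X × ℕ | (y, q.1, q.2) ∈ A}).ncard : ℝ) <
          ε * (({q : X × ℕ | (x, q.1, q.2) ∈ A} ∩
            {q : X × ℕ | (y, q.1, q.2) ∈ A}).ncard : ℝ)

/-- For a large scale space with bounded geometry, Sako's property A for the
induced coarse structure is equivalent to large scale property A. -/
theorem sakoPropA_iff_propA (L : LSS X) (hbg : BoundedGeometry L) :
    SakoPropA L ↔ PropA L := by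
  constructor
  · intro h ε hε U hU
    obtain ⟨S, ⟨V, hV, hSV⟩, A, hAS, hfin, hdiag, hineq⟩ :=
      h ε hε (⋃ B ∈ U, B ×ˢ B) ⟨U, hU, subset_rfl⟩
    refine ⟨V, hV, fun x => {q | (x, q.1, q.2) ∈ A}, hfin, ?_, hdiag, ?_⟩
    · intro x q hq
      have h2 := hSV (hAS _ hq)
      simp only [mem_iUnion] at h2
      obtain ⟨b, hb, hxy⟩ := h2
      exact ⟨⟨b, ⟨hb, ⟨x, hxy.1, rfl⟩⟩, hxy.2⟩, trivial⟩
    · intro x y hy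
      apply hineq
      obtain ⟨b, ⟨hb, z, hz1, hz2⟩, hyb⟩ := hy
      simp only [mem_iUnion]
      exact ⟨b, hb, hz2 ▸ hz1, hyb⟩
  · rintro h ε hε T ⟨U, hU, hTU⟩
    obtain ⟨V, hV, A, hfin, hsub, hdiag, hineq⟩ := h ε hε U hU
    refine ⟨⋃ b ∈ V, b ×ˢ b, ⟨V, hV, subset_rfl⟩, {p | p.2 ∈ A p.1}, ?_, hfin, hdiag, ?_⟩
    · intro p hp
      obtain ⟨b, ⟨hb, z, hzb, hzx⟩, hyb⟩ := (hsub p.1 hp).1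
      simp only [mem_iUnion]
      exact ⟨b, hb, hzx ▸ hzb, hyb⟩
    · intro x y hxy
      apply hineq
      have h2 := hTU hxy
      simp only [mem_iUnion] at h2
      obtain ⟨b, hb, hx, hy⟩ := h2
      exact ⟨b, ⟨hb, x, hx, rfl⟩, hy⟩
end
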